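/- The query procedure in the lower bound construction correctly recovers, for each i ∈ [1,k] and j ∈ [1,m], the position of symbol α_i within permutation π_j: querying the ranges [ℓ_{i,1},r_{j,1}], [ℓ_{i,2},r_{j,2}], ..., [ℓ_{i,k},r_{j,k}] in order, the first range whose answer is YES (contains a (1/k)-majority) is [ℓ_{i,x},r_{j,x}] where x is the position of α_i in π_j. -/

import Mathlib

/-- Symbols: `Sum.inl a` is the symbol `α_a`; `Sum.inr (i, d)` is a dummy. -/
abbrev GSym := ℕ ⊕ ℕ × ℕ

/-- `k' = k² - k + 2`. -/
def kp (k : ℕ) : ℕ := k ^ 2 - k + 2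

/-- The gadget `G(k,i) = α_1^{k'}·…·α_{i-1}^{k'}·α_{i+1}^{k'}·…·α_k^{k'}·
(α_i·β^{k-2})^{k-1}·α_i·β^k`. -/
def gadget (k i : ℕ) : List GSym :=
  ((((List.range k).map (· + 1)).filter (· ≠ i)).flatMap
      (fun a => List.replicate (kp k) (Sum.inl a)))
    ++ ((List.range (k - 1)).flatMap (fun t =>
          Sum.inl i :: (List.range (k - 2)).map (fun d => Sum.inr (i, t * (k - 2) + d))))
    ++ [Sum.inl i]
    ++ (List.range k).map (fun d => Sum.inr (i, (k - 1) * (k - 2) + d))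

/-- The padding `L = G(k,k)·G(k,k-1)·…·G(k,1)`. -/
def pad (k : ℕ) : List GSym :=
  ((List.range k).reverse).flatMap (fun t => gadget k (t + 1))

/-- The bad array `A = L·π_1·…·π_m`, where `p j` lists (the indices of) the
symbols of the permutation `π_j` from left to right (`j` is 0-indexed). -/
def badArr (k m : ℕ) (p : ℕ → ℕ → ℕ) : List GSym :=
  pad k ++ (List.range m).flatMap (fun j => (List.range k).map (fun t => Sum.inl (p j t)))

/-- `ℓ_{i,x}`: the (0-indexed) position in `A` of the `x`-th-from-the-right
occurrence of `α_i` inside `G(k,i)` (`x ∈ [1,k]`). -/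
def lpos (k i x : ℕ) : ℕ :=
  (k - i) * (k * kp k) + (k - 1) * kp k + (k - x) * (k - 1)

/-- `r_{j,x}`: the (0-indexed) position in `A` of the `x`-th symbol of `π_j`
(`j` 0-indexed, `x ∈ [1,k]`). -/
def rpos (k j x : ℕ) : ℕ :=
  k * (k * kp k) + j * k + (x - 1)

/-- The `(1/k)`-majority decision query on the range `[a,b]` (0-indexed,
inclusive) of the list `A`: is there a symbol of density at least `1/k`? -/
def mquery (A : List GSym) (a b k : ℕ) : Prop :=
  ∃ y : GSym, b - a + 1 ≤ k * ((A.drop a).take (b - a + 1)).count y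

namespace Q14

open List

instance : LawfulBEq GSym where
  eq_of_beq {a b} h := by
    cases a <;> cases b
    · exact congrArg Sum.inl (eq_of_beq h)
    · exact Bool.noConfusion h
    · exact Bool.noConfusion h
    · exact congrArg Sum.inr (eq_of_beq h)
  rfl {a} := by
    cases a with
    | inl v => exact beq_self_eq_true v
    | inr v => exact beq_self_eq_true v

/-! ### generic counting helpers -/

lemma count_le_one_of_nodup {α : Type} [BEq α] [LawfulBEq α] {l : List α}
    (h : l.Nodup) (y : α) : l.count y ≤ 1 := by
  induction l with
  | nil => simp
  | cons a l ih =>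
    rw [List.count_cons]
    rcases List.nodup_cons.mp h with ⟨hal, hnd⟩
    by_cases hay : a = y
    · subst hay
      rw [List.count_eq_zero_of_not_mem hal]
      simp
    · have : ((a == y) : Bool) = false := by simp [hay]
      rw [this]
      simpa using ih hnd

lemma count_eq_one_of_mem' {α : Type} [BEq α] [LawfulBEq α] {l : List α} {y : α}
    (h : l.Nodup) (hm : y ∈ l) : l.count y = 1 :=
  le_antisymm (count_le_one_of_nodup h y) (List.count_pos_iff.mpr hm)

/-! ### Pieces of the gadget -/

def A1 (k b : ℕ) : List GSym :=
  (((List.range k).map (· + 1)).filter (· ≠ b)).flatMap (fun a => List.replicate (kp k) (Sum.inl a))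

def blk (k b t : ℕ) : List GSym :=
  Sum.inl b :: (List.range (k - 2)).map (fun d => Sum.inr (b, t * (k - 2) + d))

def A4 (k b : ℕ) : List GSym :=
  (List.range k).map (fun d => Sum.inr (b, (k - 1) * (k - 2) + d))

lemma gadget_eq (k b : ℕ) :
    gadget k b = A1 k b ++ (List.range (k - 1)).flatMap (blk k b) ++ [Sum.inl b] ++ A4 k b := rfl

def Fp (p : ℕ → ℕ → ℕ) (k j : ℕ) : List GSym := (List.range k).map (fun t => Sum.inl (p j t))

lemma badArr_eq (k m : ℕ) (p : ℕ → ℕ → ℕ) :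
    badArr k m p = pad k ++ (List.range m).flatMap (Fp p k) := rfl

/-! ### flatMap helpers -/

lemma count_flatMap_eq {y : GSym} {f : ℕ → List GSym} {c : ℕ} :
    ∀ l : List ℕ, (∀ t ∈ l, (f t).count y = c) → ((l.flatMap f).count y) = l.length * c
  | [], _ => by simp
  | a :: l, h => by
    have h1 := h a (List.mem_cons_self)
    have h2 := count_flatMap_eq l (fun t ht => h t (List.mem_cons_of_mem _ ht))
    simp only [List.flatMap_cons, List.count_append, List.length_cons, h1, h2, Nat.succ_mul]
    omega

lemma count_flatMap_le {y : GSym} {f : ℕ → List GSym} {c : ℕ} :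
    ∀ l : List ℕ, (∀ t ∈ l, (f t).count y ≤ c) → ((l.flatMap f).count y) ≤ l.length * c
  | [], _ => by simp
  | a :: l, h => by
    have h1 := h a (List.mem_cons_self)
    have h2 := count_flatMap_le l (fun t ht => h t (List.mem_cons_of_mem _ ht))
    simp only [List.flatMap_cons, List.count_append, List.length_cons, Nat.succ_mul]
    omega

lemma length_flatMap_eq {f : ℕ → List GSym} {c : ℕ} :
    ∀ l : List ℕ, (∀ t ∈ l, (f t).length = c) → (l.flatMap f).length = l.length * c
  | [], _ => by simp
  | a :: l, h => by
    have h1 := h a (List.mem_cons_self)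
    have h2 := length_flatMap_eq l (fun t ht => h t (List.mem_cons_of_mem _ ht))
    simp only [List.flatMap_cons, List.length_append, List.length_cons, h1, h2, Nat.succ_mul]
    omega

lemma count_flatMap_le_one {y : GSym} {f : ℕ → List GSym} (v : ℕ) :
    ∀ l : List ℕ, l.Nodup → (∀ t ∈ l, (f t).count y ≤ if t = v then 1 else 0) →
      ((l.flatMap f).count y) ≤ 1
  | [], _, _ => by simp
  | a :: l, hnd, h => by
    simp only [List.flatMap_cons, List.count_append]
    have hal : a ∉ l := (List.nodup_cons.mp hnd).1
    have hl := count_flatMap_le_one v l (List.nodup_cons.mp hnd).2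
      (fun t ht => h t (List.mem_cons_of_mem _ ht))
    by_cases hav : a = v
    · have h0 : (l.flatMap f).count y = 0 := by
        have := count_flatMap_eq (y := y) (f := f) (c := 0) l (fun t ht => by
          have hta : t ≠ v := fun e => hal (by rw [← hav] at e; exact e ▸ ht)
          have := h t (List.mem_cons_of_mem _ ht)
          simpa [hta] using this)
        simpa using this
      have ha1 : (f a).count y ≤ 1 := by simpa [hav] using h a (List.mem_cons_self)
      omega
    · have ha0 : (f a).count y = 0 := by
        have := h a (List.mem_cons_self); simpa [hav] using this
      omega

/-! ### Arithmetic helpers -/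

lemma hkp (k : ℕ) : kp k = k * k - k + 2 := by rw [kp, pow_two]

lemma k_le_kk (k : ℕ) (hk : 1 ≤ k) : k ≤ k * k := Nat.le_mul_of_pos_left k (by omega)

lemma kp_add (k : ℕ) (hk : 1 ≤ k) : kp k + k = k * k + 2 := by
  rw [hkp]
  zify [k_le_kk k hk]
  ring

lemma k_le_kp (k : ℕ) (hk : 2 ≤ k) : k ≤ kp k := by
  have h1 : 2 * k ≤ k * k := Nat.mul_le_mul_right k hk
  have h2 := kp_add k (by omega)
  omega

/-! ### Counting in gadget pieces -/

lemma count_flat_replicate (a : ℕ) (n : ℕ) :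
    ∀ L : List ℕ, ((L.flatMap (fun c => List.replicate n (Sum.inl c : GSym))).count (Sum.inl a))
      = n * L.count a
  | [] => by simp
  | c :: L => by
    rw [List.flatMap_cons, List.count_append, List.count_replicate, List.count_cons,
      count_flat_replicate a n L]
    by_cases hca : c = a
    · subst hca
      simp only [beq_self_eq_true, if_true, Nat.mul_add, Nat.mul_one]
      omega
    · have e1 : ((Sum.inl c : GSym) == Sum.inl a) = false := by simp [hca]
      have e2 : ((c == a) : Bool) = false := by simp [hca]
      rw [e1, e2]
      simp

lemma W_count (k b a : ℕ) :
    ((((List.range k).map (· + 1)).filter (· ≠ b)).count a)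
      = if 1 ≤ a ∧ a ≤ k ∧ a ≠ b then 1 else 0 := by
  have hnd : ((((List.range k).map (· + 1)).filter (· ≠ b))).Nodup := by
    refine List.Nodup.filter _ ?_
    exact (List.nodup_range (n := k)).map_on (fun u _ v _ h => by omega)
  have hmem : a ∈ (((List.range k).map (· + 1)).filter (· ≠ b)) ↔ (1 ≤ a ∧ a ≤ k ∧ a ≠ b) := by
    simp only [List.mem_filter, List.mem_map, List.mem_range, decide_eq_true_eq]
    constructor
    · rintro ⟨⟨c, hc, rfl⟩, h⟩; exact ⟨by omega, by omega, h⟩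
    · rintro ⟨h1, h2, h3⟩; exact ⟨⟨a - 1, by omega, by omega⟩, h3⟩
  split
  · exact count_eq_one_of_mem' hnd (hmem.2 (by assumption))
  · exact List.count_eq_zero_of_not_mem (fun h => (by assumption : ¬ _) (hmem.1 h))

lemma length_filter_ne (b : ℕ) :
    ∀ l : List ℕ, (l.filter (· ≠ b)).length + l.count b = l.length
  | [] => by simp
  | a :: l => by
    have ih := length_filter_ne b l
    by_cases hab : a = b
    · subst hab
      rw [List.filter_cons_of_neg (by simp), List.count_cons_self]
      simp only [List.length_cons]
      omega
    · rw [List.filter_cons_of_pos (by simpa using hab),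
        List.count_cons_of_ne hab]
      simp only [List.length_cons]
      omega

lemma W_length (k b : ℕ) (hb1 : 1 ≤ b) (hbk : b ≤ k) :
    (((List.range k).map (· + 1)).filter (· ≠ b)).length = k - 1 := by
  have h := length_filter_ne b (((List.range k).map (· + 1)))
  have hc : (((List.range k).map (· + 1))).count b = 1 := by
    refine count_eq_one_of_mem' ((List.nodup_range (n := k)).map_on (fun u _ v _ h => by omega)) ?_
    simp only [List.mem_map, List.mem_range]
    exact ⟨b - 1, by omega, by omega⟩
  have hlen : (((List.range k).map (· + 1))).length = k := by simp
  omega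

lemma A1_count_inl (k b a : ℕ) :
    (A1 k b).count (Sum.inl a) = if 1 ≤ a ∧ a ≤ k ∧ a ≠ b then kp k else 0 := by
  rw [A1, count_flat_replicate, W_count]
  split <;> simp

lemma A1_count_inr (k b : ℕ) (z : ℕ × ℕ) : (A1 k b).count (Sum.inr z) = 0 := by
  refine List.count_eq_zero_of_not_mem ?_
  intro h
  simp only [A1, List.mem_flatMap, List.mem_replicate] at h
  obtain ⟨c, _, _, h⟩ := h
  exact nomatch h

lemma A1_length (k b : ℕ) (hb1 : 1 ≤ b) (hbk : b ≤ k) : (A1 k b).length = (k - 1) * kp k := by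
  rw [A1, length_flatMap_eq _ (fun t _ => List.length_replicate), W_length k b hb1 hbk]

lemma blk_count_inl (k b t a : ℕ) : (blk k b t).count (Sum.inl a) = if a = b then 1 else 0 := by
  simp only [blk, List.count_cons]
  have h0 : (((List.range (k - 2)).map (fun d => (Sum.inr (b, t * (k - 2) + d) : GSym))).count
      (Sum.inl a)) = 0 := by
    refine List.count_eq_zero_of_not_mem ?_
    simp
  rw [h0]
  by_cases h : a = b
  · subst h; simp
  · have hbe : ((Sum.inl b : GSym) == Sum.inl a) = false := by
      simp only [beq_eq_false_iff_ne, ne_eq, Sum.inl.injEq]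
      exact fun e => h e.symm
    rw [hbe]
    simp [h]

lemma blk_length (k b t : ℕ) (hk : 2 ≤ k) : (blk k b t).length = k - 1 := by
  simp [blk]; omega

lemma blk_count_inr_ne (k b t : ℕ) (c d : ℕ) (h : t ≠ d / (k - 2)) :
    (blk k b t).count (Sum.inr (c, d)) = 0 := by
  refine List.count_eq_zero_of_not_mem ?_
  intro hm
  simp only [blk, List.mem_cons, List.mem_map, List.mem_range] at hm
  rcases hm with hm | ⟨e, he, hm⟩
  · exact nomatch hm
  · simp only [Sum.inr.injEq, Prod.mk.injEq] at hm
    have h2 : t * (k - 2) + e = d := hm.2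
    have hpos : 0 < k - 2 := by omega
    apply h
    rw [← h2, mul_comm, Nat.mul_add_div hpos, Nat.div_eq_of_lt he]
    omega

lemma blk_count_le (k b t : ℕ) (z : ℕ × ℕ) :
    (blk k b t).count (Sum.inr z) ≤ if t = z.2 / (k - 2) then 1 else 0 := by
  obtain ⟨c, d⟩ := z
  split
  · refine count_le_one_of_nodup ?_ _
    simp only [blk]
    refine List.nodup_cons.mpr ⟨by simp, ?_⟩
    exact (List.nodup_range).map_on (fun u _ v _ h => by
      simp only [Sum.inr.injEq, Prod.mk.injEq] at h; omega)
  · rw [blk_count_inr_ne k b t c d (by assumption)]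

lemma A4_count_inl (k b a : ℕ) : (A4 k b).count (Sum.inl a) = 0 := by
  refine List.count_eq_zero_of_not_mem ?_
  simp [A4]

lemma A4_count_le (k b : ℕ) (y : GSym) : (A4 k b).count y ≤ 1 := by
  refine count_le_one_of_nodup ?_ y
  exact (List.nodup_range).map_on (fun u _ v _ h => by
    simp only [Sum.inr.injEq, Prod.mk.injEq] at h; omega)

lemma A2_count_inr_le (k b c d : ℕ) :
    (((List.range (k - 1)).flatMap (blk k b)).count (Sum.inr (c, d))) ≤ 1 :=
  count_flatMap_le_one (d / (k - 2)) _ (List.nodup_range)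
    (fun t _ => blk_count_le k b t (c, d))

/-! ### Counting in the gadget -/

lemma gadget_count_inl (k b a : ℕ) (hk : 2 ≤ k) (hb1 : 1 ≤ b) (hbk : b ≤ k) :
    (gadget k b).count (Sum.inl a)
      = if a = b then k else if 1 ≤ a ∧ a ≤ k then kp k else 0 := by
  rw [gadget_eq]
  simp only [List.count_append]
  rw [A1_count_inl, A4_count_inl,
    count_flatMap_eq (c := if a = b then 1 else 0) _ (fun t _ => blk_count_inl k b t a)]
  simp only [List.length_range]
  by_cases hab : a = b
  · subst hab
    have h1 : (([Sum.inl a] : List GSym)).count (Sum.inl a) = 1 := by simp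
    have h2 : ¬ (1 ≤ a ∧ a ≤ k ∧ a ≠ a) := by simp
    rw [if_pos rfl, if_pos rfl, if_neg h2, h1]
    omega
  · have h1 : (([Sum.inl b] : List GSym)).count (Sum.inl a) = 0 := by
      refine List.count_eq_zero_of_not_mem ?_
      simp only [List.mem_singleton, Sum.inl.injEq]
      omega
    rw [if_neg hab, if_neg hab, h1]
    by_cases hr : 1 ≤ a ∧ a ≤ k
    · rw [if_pos ⟨hr.1, hr.2, hab⟩, if_pos hr]; ring
    · rw [if_neg (by tauto), if_neg hr]; ring

lemma gadget_count_inl_le (k b a : ℕ) (hk : 2 ≤ k) (hb1 : 1 ≤ b) (hbk : b ≤ k) :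
    (gadget k b).count (Sum.inl a) ≤ kp k := by
  rw [gadget_count_inl k b a hk hb1 hbk]
  have := k_le_kp k hk
  split
  · omega
  · split <;> omega

lemma mem_gadget_inr {k b : ℕ} {z : ℕ × ℕ} (h : Sum.inr z ∈ gadget k b) : z.1 = b := by
  rw [gadget_eq] at h
  simp only [List.mem_append, List.mem_flatMap, List.mem_replicate, List.mem_map, A1, A4, blk,
    List.mem_cons, List.mem_range, List.mem_filter, List.mem_singleton] at h
  rcases h with ((⟨c, _, _, hc⟩ | ⟨t, _, hc | ⟨e, _, hc⟩⟩) | hc) | ⟨e, _, hc⟩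
  · exact nomatch hc
  · exact nomatch hc
  · simp only [Sum.inr.injEq] at hc
    rw [← hc]
  · rcases hc with hc | hc
    · exact nomatch hc
    · simp at hc
  · simp only [Sum.inr.injEq] at hc
    rw [← hc]

lemma gadget_count_inr_ne (k b : ℕ) (z : ℕ × ℕ) (h : z.1 ≠ b) :
    (gadget k b).count (Sum.inr z) = 0 :=
  List.count_eq_zero_of_not_mem (fun hm => h (mem_gadget_inr hm))

lemma gadget_count_inr_le (k b : ℕ) (hk : 2 ≤ k) (z : ℕ × ℕ) :
    (gadget k b).count (Sum.inr z) ≤ 1 := by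
  obtain ⟨c, d⟩ := z
  rw [gadget_eq]
  simp only [List.count_append]
  rw [A1_count_inr]
  have h3 : (([Sum.inl b] : List GSym)).count (Sum.inr (c, d)) = 0 := by
    refine List.count_eq_zero_of_not_mem ?_; simp
  rw [h3]
  rcases lt_or_ge d ((k - 1) * (k - 2)) with hd | hd
  · have h4 : (A4 k b).count (Sum.inr (c, d)) = 0 := by
      refine List.count_eq_zero_of_not_mem ?_
      intro hm
      simp only [A4, List.mem_map, List.mem_range] at hm
      obtain ⟨e, he, hm⟩ := hm
      simp only [Sum.inr.injEq, Prod.mk.injEq] at hm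
      omega
    have h2 := A2_count_inr_le k b c d
    omega
  · have h2 : (((List.range (k - 1)).flatMap (blk k b)).count (Sum.inr (c, d))) = 0 := by
      refine List.count_eq_zero_of_not_mem ?_
      intro hm
      simp only [List.mem_flatMap, List.mem_range, blk, List.mem_cons, List.mem_map] at hm
      obtain ⟨t, ht, hm | ⟨e, he, hm⟩⟩ := hm
      · exact nomatch hm
      · simp only [Sum.inr.injEq, Prod.mk.injEq] at hm
        have hde : t * (k - 2) + e = d := hm.2
        have e1 : (t + 1) * (k - 2) = t * (k - 2) + (k - 2) := by ring
        have e2 : (t + 1) * (k - 2) ≤ (k - 1) * (k - 2) :=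
          Nat.mul_le_mul_right _ (by omega)
        omega
    have h4 := A4_count_le k b (Sum.inr (c, d))
    omega

lemma gadget_length (k b : ℕ) (hk : 2 ≤ k) (hb1 : 1 ≤ b) (hbk : b ≤ k) :
    (gadget k b).length = k * kp k := by
  rw [gadget_eq]
  simp only [List.length_append]
  rw [A1_length k b hb1 hbk,
    length_flatMap_eq _ (fun t _ => blk_length k b t hk)]
  simp only [List.length_range, List.length_cons, List.length_nil, A4, List.length_map]
  have h1 := k_le_kk k (by omega)
  have h2 : (k - 1) * kp k + kp k = k * kp k := by
    calc (k - 1) * kp k + kp k = (k - 1 + 1) * kp k := by ring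
    _ = k * kp k := by rw [show k - 1 + 1 = k by omega]
  have h3 : (k - 1) * (k - 1) + 1 + k = kp k := by
    rw [hkp]
    zify [show 1 ≤ k by omega, h1]
    ring
  omega

/-! ### The permutation pieces -/

lemma Fp_nodup {k m : ℕ} {p : ℕ → ℕ → ℕ}
    (hrange : ∀ j < m, ∀ t < k, 1 ≤ p j t ∧ p j t ≤ k)
    (hperm : ∀ j < m, ∀ a, 1 ≤ a → a ≤ k → ∃! t, t < k ∧ p j t = a)
    {j : ℕ} (hj : j < m) : (Fp p k j).Nodup := by
  refine (List.nodup_range (n := k)).map_on ?_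
  intro t ht t' ht' hEq
  simp only [List.mem_range] at ht ht'
  have hEq' : p j t = p j t' := by simpa using hEq
  obtain ⟨hr1, hr2⟩ := hrange j hj t ht
  obtain ⟨t0, _, huniq⟩ := hperm j hj (p j t) hr1 hr2
  have h1 := huniq t ⟨ht, rfl⟩
  have h2 := huniq t' ⟨ht', hEq'.symm⟩
  omega

lemma Fp_count_inr {p : ℕ → ℕ → ℕ} {k j : ℕ} (z : ℕ × ℕ) :
    (Fp p k j).count (Sum.inr z) = 0 := by
  refine List.count_eq_zero_of_not_mem ?_
  simp [Fp]

lemma Fp_length (p : ℕ → ℕ → ℕ) (k j : ℕ) : (Fp p k j).length = k := by simp [Fp]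

end Q14

namespace Q14

open List

lemma key (k m : ℕ) (p : ℕ → ℕ → ℕ) (hk : 2 ≤ k)
    (hrange : ∀ j < m, ∀ t < k, 1 ≤ p j t ∧ p j t ≤ k)
    (hperm : ∀ j < m, ∀ a, 1 ≤ a → a ≤ k → ∃! t, t < k ∧ p j t = a)
    (i j x₀ x : ℕ) (hi1 : 1 ≤ i) (hik : i ≤ k) (hj : j < m)
    (hx₀ : x₀ < k) (hpos : p j x₀ = i) (hx1 : 1 ≤ x) (hxk : x ≤ k) :
    mquery (badArr k m p) (lpos k i x) (rpos k j x) k ↔ x₀ < x := by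
  classical
  have hk1 : 1 ≤ k := by omega
  have hkkle := k_le_kk k hk1
  have hkple := k_le_kp k hk
  -- pieces
  set off := (k - 1) * kp k + (k - x) * (k - 1) with hoffdef
  set HI : List GSym :=
    (((List.range (k - i)).map (fun t => i + t)).reverse).flatMap (fun t => gadget k (t + 1))
    with hHIdef
  set Gt : List GSym :=
    ((List.range (x - 1)).map (fun t => (k - x) + t)).flatMap (blk k i)
      ++ ([Sum.inl i] ++ A4 k i) with hGtdef
  set LG : List GSym :=
    ((List.range (i - 1)).reverse).flatMap (fun t => gadget k (t + 1)) with hLGdef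
  set PP : List GSym := (List.range j).flatMap (Fp p k) with hPPdef
  set S : List GSym := Gt ++ (LG ++ (PP ++ (Fp p k j).take x)) with hSdef
  -- dropping inside the gadget
  have hA1len := A1_length k i hi1 hik
  have hdropGad : (gadget k i).drop off = Gt := by
    have hsplit2 : (List.range (k - 1)).flatMap (blk k i)
        = (List.range (k - x)).flatMap (blk k i)
          ++ ((List.range (x - 1)).map (fun t => (k - x) + t)).flatMap (blk k i) := by
      rw [← List.flatMap_append, ← List.range_add,
        show k - x + (x - 1) = k - 1 by omega]
    have hpre : ((List.range (k - x)).flatMap (blk k i)).length = (k - x) * (k - 1) := by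
      rw [length_flatMap_eq _ (fun t _ => blk_length k i t hk), List.length_range]
    have hgad : gadget k i
        = A1 k i ++ ((List.range (k - 1)).flatMap (blk k i) ++ ([Sum.inl i] ++ A4 k i)) := by
      rw [gadget_eq]; simp [List.append_assoc]
    rw [hgad, hoffdef, ← hA1len, List.drop_length_add_append, hsplit2, List.append_assoc, ← hpre,
      List.drop_left]
  -- length facts
  have hofflen : off ≤ k * kp k := by
    have h1 : (k - x) * (k - 1) ≤ k * (k - 1) := Nat.mul_le_mul_right _ (Nat.sub_le _ _)
    have h2 : k * (k - 1) + k = k * k := by zify [hk1]; ring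
    have h3 : (k - 1) * kp k + kp k = k * kp k := by
      calc (k - 1) * kp k + kp k = (k - 1 + 1) * kp k := by ring
      _ = k * kp k := by rw [show k - 1 + 1 = k by omega]
    have h4 : kp k = k * k - k + 2 := hkp k
    omega
  have hHIlen : HI.length = (k - i) * (k * kp k) := by
    rw [hHIdef, length_flatMap_eq _ ?_, List.length_reverse, List.length_map, List.length_range]
    intro t ht
    simp only [List.mem_reverse, List.mem_map, List.mem_range] at ht
    obtain ⟨s, hs, rfl⟩ := ht
    exact gadget_length k (i + s + 1) hk (by omega) (by omega)
  have hLGlen : LG.length = (i - 1) * (k * kp k) := by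
    rw [hLGdef, length_flatMap_eq _ ?_, List.length_reverse, List.length_range]
    intro t ht
    simp only [List.mem_reverse, List.mem_range] at ht
    exact gadget_length k (t + 1) hk (by omega) (by omega)
  have hPPlen : PP.length = j * k := by
    rw [hPPdef, length_flatMap_eq _ (fun t _ => Fp_length p k t), List.length_range]
  have hGtlen : Gt.length = (x - 1) * (k - 1) + (1 + k) := by
    rw [hGtdef]
    simp only [List.length_append]
    rw [length_flatMap_eq _ (fun t _ => blk_length k i t hk)]
    simp [A4]
  have hSlen : S.length = (i - 1) * (k * kp k) + j * k + k * x + 2 := by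
    rw [hSdef]
    simp only [List.length_append, List.length_take, Fp_length, hGtlen, hLGlen, hPPlen,
      min_eq_left hxk]
    have : (x - 1) * (k - 1) + (1 + k) + x = k * x + 2 := by
      zify [hx1, hk1]; ring
    omega
  -- the decomposition of badArr
  have hrk : List.range k = List.range i ++ (List.range (k - i)).map (fun t => i + t) := by
    conv_lhs => rw [show k = i + (k - i) by omega]
    exact List.range_add (n := i) (m := k - i)
  have hri : List.range i = List.range (i - 1) ++ [i - 1] := by
    conv_lhs => rw [show i = (i - 1) + 1 by omega]
    simpa using List.range_succ (n := i - 1)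
  have hpad : pad k = HI ++ (gadget k i ++ LG) := by
    rw [pad, hrk, hri]
    simp only [List.reverse_append, List.flatMap_append, List.reverse_cons, List.reverse_nil,
      List.nil_append, List.flatMap_cons, List.flatMap_nil, List.append_nil,
      show i - 1 + 1 = i by omega, List.append_assoc, hHIdef, hLGdef]
  have hRR : (List.range m).flatMap (Fp p k)
      = PP ++ (((Fp p k j).take x ++ (Fp p k j).drop x)
          ++ ((List.range (m - j - 1)).map (fun t => j + Nat.succ t)).flatMap (Fp p k)) := by
    conv_lhs => rw [show m = j + (m - j) by omega, List.range_add,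
      show m - j = (m - j - 1) + 1 by omega, List.range_succ_eq_map]
    simp only [List.flatMap_append, List.map_cons, List.flatMap_cons, Nat.add_zero,
      List.map_map, List.take_append_drop, hPPdef]
    rfl
  have hbig : badArr k m p = (HI ++ (gadget k i).take off)
      ++ (S ++ ((Fp p k j).drop x
          ++ ((List.range (m - j - 1)).map (fun t => j + Nat.succ t)).flatMap (Fp p k))) := by
    rw [badArr_eq, hpad, hRR]
    conv_lhs => rw [← List.take_append_drop off (gadget k i), hdropGad]
    rw [hSdef]
    simp only [List.append_assoc]
  have hplen : (HI ++ (gadget k i).take off).length = lpos k i x := by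
    rw [List.length_append, List.length_take, gadget_length k i hk hi1 hik,
      min_eq_left hofflen, hHIlen, lpos, hoffdef]
    ring
  have hsum : lpos k i x + S.length = rpos k j x + 1 := by
    rw [hSlen, lpos, rpos, hkp]
    zify [hi1, hik, hx1, hxk, hk1, hkkle]
    ring
  have hS2 : 2 ≤ S.length := by rw [hSlen]; exact Nat.le_add_left 2 _
  have hlen1 : rpos k j x - lpos k i x + 1 = S.length := by omega
  have hslice : ((badArr k m p).drop (lpos k i x)).take (rpos k j x - lpos k i x + 1) = S := by
    rw [hlen1, hbig, ← hplen, List.drop_left, List.take_left]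
  -- counts
  have hGt_i : Gt.count (Sum.inl i) = x := by
    rw [hGtdef]
    simp only [List.count_append]
    rw [count_flatMap_eq (c := 1) _ (fun t _ => by rw [blk_count_inl]; simp),
      A4_count_inl]
    simp only [List.length_map, List.length_range]
    have : (([Sum.inl i] : List GSym)).count (Sum.inl i) = 1 := by simp
    rw [this]
    omega
  have hGt_a : ∀ a, a ≠ i → Gt.count (Sum.inl a) = 0 := by
    intro a ha
    rw [hGtdef]
    simp only [List.count_append]
    rw [count_flatMap_eq (c := 0) _ (fun t _ => by rw [blk_count_inl]; simp [ha]),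
      A4_count_inl]
    have hsing : (([Sum.inl i] : List GSym)).count (Sum.inl a) = 0 := by
      refine List.count_eq_zero_of_not_mem ?_
      simp only [List.mem_singleton, Sum.inl.injEq]
      omega
    rw [hsing]
    simp
  have hGt_r_le : ∀ z : ℕ × ℕ, Gt.count (Sum.inr z) ≤ (gadget k i).count (Sum.inr z) := by
    intro z
    rw [← hdropGad]
    exact (List.drop_sublist _ _).count_le _
  -- LG counts
  have hLG_i : LG.count (Sum.inl i) = (i - 1) * kp k := by
    rw [hLGdef, count_flatMap_eq (c := kp k) _ ?_, List.length_reverse, List.length_range]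
    intro t ht
    simp only [List.mem_reverse, List.mem_range] at ht
    rw [gadget_count_inl k (t + 1) i hk (by omega) (by omega)]
    rw [if_neg (by omega), if_pos ⟨hi1, hik⟩]
  have hLG_le : ∀ a, LG.count (Sum.inl a) ≤ (i - 1) * kp k := by
    intro a
    rw [hLGdef]
    have := count_flatMap_le (y := Sum.inl a) (c := kp k)
      (f := fun t => gadget k (t + 1)) ((List.range (i - 1)).reverse) ?_
    · rwa [List.length_reverse, List.length_range] at this
    · intro t ht
      simp only [List.mem_reverse, List.mem_range] at ht
      exact gadget_count_inl_le k (t + 1) a hk (by omega) (by omega)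
  have hLG_r_le : ∀ z : ℕ × ℕ, LG.count (Sum.inr z) ≤ 1 := by
    intro z
    rw [hLGdef]
    refine count_flatMap_le_one (z.1 - 1) _ (List.nodup_reverse.mpr (List.nodup_range)) ?_
    intro t ht
    simp only [List.mem_reverse, List.mem_range] at ht
    split
    · exact gadget_count_inr_le k (t + 1) hk z
    · rw [gadget_count_inr_ne k (t + 1) z (by omega)]
  have hLG_r_i : ∀ z : ℕ × ℕ, z.1 = i → LG.count (Sum.inr z) = 0 := by
    intro z hz
    rw [hLGdef, count_flatMap_eq (c := 0) _ ?_]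
    · simp
    · intro t ht
      simp only [List.mem_reverse, List.mem_range] at ht
      exact gadget_count_inr_ne k (t + 1) z (by omega)
  -- PP counts
  have hPP_i : PP.count (Sum.inl i) = j * 1 := by
    rw [hPPdef, count_flatMap_eq (c := 1) _ ?_, List.length_range]
    intro t ht
    simp only [List.mem_range] at ht
    refine count_eq_one_of_mem' (Fp_nodup hrange hperm (by omega)) ?_
    obtain ⟨t0, ⟨ht0, hpt0⟩, _⟩ := hperm t (by omega) i hi1 hik
    simp only [Fp, List.mem_map, List.mem_range]
    exact ⟨t0, ht0, by rw [hpt0]⟩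
  have hPP_le : ∀ y : GSym, PP.count y ≤ j * 1 := by
    intro y
    rw [hPPdef]
    have := count_flatMap_le (y := y) (c := 1) (f := Fp p k) (List.range j) ?_
    · rwa [List.length_range] at this
    · intro t ht
      simp only [List.mem_range] at ht
      exact count_le_one_of_nodup (Fp_nodup hrange hperm (by omega)) y
  have hPP_r : ∀ z : ℕ × ℕ, PP.count (Sum.inr z) = 0 := by
    intro z
    rw [hPPdef, count_flatMap_eq (c := 0) _ (fun t _ => Fp_count_inr z)]
    simp
  -- take-piece counts
  have htake_le : ∀ y : GSym, ((Fp p k j).take x).count y ≤ 1 :=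
    fun y => le_trans ((List.take_sublist _ _).count_le _)
      (count_le_one_of_nodup (Fp_nodup hrange hperm hj) y)
  have htake_r : ∀ z : ℕ × ℕ, ((Fp p k j).take x).count (Sum.inr z) = 0 := by
    intro z
    have h1 : ((Fp p k j).take x).count (Sum.inr z) ≤ (Fp p k j).count (Sum.inr z) :=
      (List.take_sublist _ _).count_le _
    have h2 := Fp_count_inr (p := p) (k := k) (j := j) z
    omega
  have htake_eq : (Fp p k j).take x = (List.range x).map (fun t => Sum.inl (p j t)) := by
    have hFp : Fp p k j = (List.range k).map (fun t => Sum.inl (p j t)) := rfl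
    rw [hFp, ← List.map_take, List.take_range, min_eq_left hxk]
  have htake_i_pos : x₀ < x → 1 ≤ ((Fp p k j).take x).count (Sum.inl i) := by
    intro hlt
    rw [htake_eq]
    refine List.count_pos_iff.mpr ?_
    simp only [List.mem_map, List.mem_range]
    exact ⟨x₀, hlt, by rw [hpos]⟩
  have htake_i_zero : x ≤ x₀ → ((Fp p k j).take x).count (Sum.inl i) = 0 := by
    intro hle
    rw [htake_eq, List.count_eq_zero]
    intro hm
    simp only [List.mem_map, List.mem_range] at hm
    obtain ⟨t, ht, hpt⟩ := hm
    have hpt' : p j t = i := by simpa using hpt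
    obtain ⟨t0, _, huniq⟩ := hperm j hj i hi1 hik
    have h1 := huniq t ⟨by omega, hpt'⟩
    have h2 := huniq x₀ ⟨hx₀, hpos⟩
    omega
  -- the query reduces to a statement about S
  have hquery : mquery (badArr k m p) (lpos k i x) (rpos k j x) k
      ↔ ∃ y : GSym, S.length ≤ k * S.count y := by
    have hslice' : ((badArr k m p).drop (lpos k i x)).take S.length = S := by
      rw [← hlen1]; exact hslice
    unfold mquery
    rw [hlen1, hslice']
  rw [hquery]
  have hcount : ∀ y : GSym, S.count y
      = Gt.count y + (LG.count y + (PP.count y + ((Fp p k j).take x).count y)) := by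
    intro y
    rw [hSdef]
    simp [List.count_append]
  constructor
  · -- YES answer implies x₀ < x
    rintro ⟨y, hy⟩
    by_contra hnot
    have hxle : x ≤ x₀ := by omega
    rw [hcount] at hy
    rcases y with a | z
    · by_cases hai : a = i
      · rw [hai] at hy
        rw [hGt_i, hLG_i, hPP_i, htake_i_zero hxle] at hy
        have hmul : k * (x + ((i - 1) * kp k + (j * 1 + 0)))
            = (i - 1) * (k * kp k) + j * k + k * x := by ring
        rw [hmul] at hy
        omega
      · have hb : Gt.count (Sum.inl a) + (LG.count (Sum.inl a)
            + (PP.count (Sum.inl a) + ((Fp p k j).take x).count (Sum.inl a)))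
            ≤ (i - 1) * kp k + j * 1 + 1 := by
          have h1 := hGt_a a hai
          have h2 := hLG_le a
          have h3 := hPP_le (Sum.inl a)
          have h4 := htake_le (Sum.inl a)
          omega
        have hle2 := Nat.mul_le_mul_left k hb
        have hmul : k * ((i - 1) * kp k + j * 1 + 1)
            = (i - 1) * (k * kp k) + j * k + k := by ring
        rw [hmul] at hle2
        have hkx : k * 1 ≤ k * x := Nat.mul_le_mul_left k hx1
        omega
    · have hb : Gt.count (Sum.inr z) + (LG.count (Sum.inr z)
          + (PP.count (Sum.inr z) + ((Fp p k j).take x).count (Sum.inr z))) ≤ 1 := by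
        have h3 := hPP_r z
        have h4 := htake_r z
        by_cases hz : z.1 = i
        · have h1 := le_trans (hGt_r_le z) (gadget_count_inr_le k i hk z)
          have h2 := hLG_r_i z hz
          omega
        · have h1 : Gt.count (Sum.inr z) = 0 := by
            have := le_trans (hGt_r_le z) (le_of_eq (gadget_count_inr_ne k i z hz))
            omega
          have h2 := hLG_r_le z
          omega
      have hle2 := Nat.mul_le_mul_left k hb
      have hkx : k * 1 ≤ k * x := Nat.mul_le_mul_left k hx1
      omega
  · -- x₀ < x implies YES
    intro hlt
    refine ⟨Sum.inl i, ?_⟩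
    rw [hcount, hGt_i, hLG_i, hPP_i]
    have h4 := htake_i_pos hlt
    have hb : x + ((i - 1) * kp k + (j * 1 + 1))
        ≤ x + ((i - 1) * kp k + (j * 1 + ((Fp p k j).take x).count (Sum.inl i))) := by omega
    have hle2 := Nat.mul_le_mul_left k hb
    have hmul : k * (x + ((i - 1) * kp k + (j * 1 + 1)))
        = (i - 1) * (k * kp k) + j * k + k * x + k := by ring
    rw [hmul] at hle2
    omega

end Q14

/-- Correctness of the query procedure of the lower bound: for `i ∈ [1,k]` and
`j ∈ [0,m)`, querying `[ℓ_{i,1},r_{j,1}], [ℓ_{i,2},r_{j,2}], …` in order, the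
first YES answer occurs exactly at `x = x₀ + 1`, the (1-indexed) position of
`α_i` within `π_j`. -/
theorem stmt_14 (k m : ℕ) (p : ℕ → ℕ → ℕ) (hk : 2 ≤ k)
    (hrange : ∀ j < m, ∀ t < k, 1 ≤ p j t ∧ p j t ≤ k)
    (hperm : ∀ j < m, ∀ a, 1 ≤ a → a ≤ k → ∃! t, t < k ∧ p j t = a)
    (i j x₀ : ℕ) (hi1 : 1 ≤ i) (hik : i ≤ k) (hj : j < m)
    (hx₀ : x₀ < k) (hpos : p j x₀ = i) :
    (∀ x, 1 ≤ x → x ≤ x₀ → ¬ mquery (badArr k m p) (lpos k i x) (rpos k j x) k) ∧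
      mquery (badArr k m p) (lpos k i (x₀ + 1)) (rpos k j (x₀ + 1)) k := by
  constructor
  · intro x hx1 hxx0 hq
    have hxk : x ≤ k := by omega
    have := (Q14.key k m p hk hrange hperm i j x₀ x hi1 hik hj hx₀ hpos hx1 hxk).mp hq
    omega
  · exact (Q14.key k m p hk hrange hperm i j x₀ (x₀ + 1) hi1 hik hj hx₀ hpos (by omega)
      (by omega)).mpr (by omega)
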